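/- Let D = (P, B) be a nontrivial 2-(v,k,λ) design with replication number r, and let G ≤ Aut(D) be a half-flag-transitive automorphism group of D. Then r/gcd(r, 2λ) divides every nontrivial subdegree of G, i.e., for every point α and every orbit Γ of G_α on P with Γ ≠ {α}, r/gcd(r, 2λ) divides |Γ|. -/

import Mathlib

open Finset

/-- `blocks` is a (simple) nontrivial 2-(v,k,λ) design on the point set `P`,
with replication number `r`. -/
structure IsTwoDesign {P : Type*} [Fintype P] [DecidableEq P]
    (blocks : Finset (Finset P)) (v k lam r : ℕ) : Prop where
  card_points : Fintype.card P = v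
  block_size : ∀ B ∈ blocks, B.card = k
  lam_pos : 0 < lam
  pair_count : ∀ x y : P, x ≠ y →
    (blocks.filter fun B => x ∈ B ∧ y ∈ B).card = lam
  repl_count : ∀ x : P, (blocks.filter fun B => x ∈ B).card = r
  k_gt : 2 < k
  k_lt : k < v - 1

/-- `G` is a group of automorphisms of the design with block set `blocks`:
every element of `G` maps blocks to blocks. -/
def IsAutGroup {P : Type*} [DecidableEq P] (G : Subgroup (Equiv.Perm P))
    (blocks : Finset (Finset P)) : Prop :=
  ∀ g ∈ G, ∀ B ∈ blocks, B.image ⇑g ∈ blocks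

/-- `G` is half-flag-transitive on the design with block set `blocks`:
`G` is transitive on blocks, and for every block `B` the setwise stabilizer
of `B` in `G` has exactly two orbits `O₁`, `O₂` on the points of `B`,
of equal size (hence each of size `k/2`). -/
def HalfFlagTransitive {P : Type*} [DecidableEq P] (G : Subgroup (Equiv.Perm P))
    (blocks : Finset (Finset P)) : Prop :=
  (∀ B₁ ∈ blocks, ∀ B₂ ∈ blocks, ∃ g ∈ G, B₁.image ⇑g = B₂) ∧
  ∀ B ∈ blocks, ∃ O₁ O₂ : Finset P,
    O₁.Nonempty ∧ O₂.Nonempty ∧ Disjoint O₁ O₂ ∧ O₁ ∪ O₂ = B ∧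
    O₁.card = O₂.card ∧
    (∀ g ∈ G, B.image ⇑g = B → O₁.image ⇑g = O₁) ∧
    (∀ g ∈ G, B.image ⇑g = B → O₂.image ⇑g = O₂) ∧
    (∀ x ∈ O₁, ∀ y ∈ O₁, ∃ g ∈ G, B.image ⇑g = B ∧ g x = y) ∧
    (∀ x ∈ O₂, ∀ y ∈ O₂, ∃ g ∈ G, B.image ⇑g = B ∧ g x = y)

/-- `C` is a partition of the point set `P` that is invariant under `G`. -/
def IsInvariantPartition {P : Type*} [Fintype P] [DecidableEq P]
    (G : Subgroup (Equiv.Perm P)) (C : Finset (Finset P)) : Prop :=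
  (∀ c ∈ C, c.Nonempty) ∧
  (∀ x : P, ∃! c : Finset P, c ∈ C ∧ x ∈ c) ∧
  (∀ g ∈ G, ∀ c ∈ C, c.image ⇑g ∈ C)

/-- A partition of `P` is trivial if all classes are singletons, or it is `{P}`. -/
def TrivialPartition {P : Type*} [Fintype P] [DecidableEq P]
    (C : Finset (Finset P)) : Prop :=
  (∀ c ∈ C, c.card = 1) ∨ C = {Finset.univ}

/-- `G` is point-primitive: it is transitive on points and the only
`G`-invariant partitions of the point set are the trivial ones. -/
def PointPrimitive {P : Type*} [Fintype P] [DecidableEq P]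
    (G : Subgroup (Equiv.Perm P)) : Prop :=
  (∀ x y : P, ∃ g ∈ G, g x = y) ∧
  ∀ C : Finset (Finset P), IsInvariantPartition G C → TrivialPartition C


section AuxHelpers

private lemma double_count {A B : Type*} (s : Finset A) (t : Finset B)
    (p : A → B → Prop) [∀ a b, Decidable (p a b)] :
    (∑ a ∈ s, (t.filter fun b => p a b).card)
      = ∑ b ∈ t, (s.filter fun a => p a b).card := by
  simp only [Finset.card_filter]
  exact Finset.sum_comm

private lemma triple_count {A B C : Type*} (s : Finset A) (s' : Finset B) (t : Finset C)
    (p : A → C → Prop) (q : B → C → Prop)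
    [∀ a c, Decidable (p a c)] [∀ b c, Decidable (q b c)] :
    (∑ a ∈ s, ∑ b ∈ s', (t.filter fun c => p a c ∧ q b c).card)
      = ∑ c ∈ t, (s.filter fun a => p a c).card * (s'.filter fun b => q b c).card := by
  have h : ∀ (a : A) (b : B) (c : C), (if p a c ∧ q b c then (1:ℕ) else 0)
      = (if p a c then 1 else 0) * (if q b c then 1 else 0) := by
    intro a b c
    by_cases h1 : p a c <;> by_cases h2 : q b c <;> simp [h1, h2]
  simp only [Finset.card_filter, h]
  calc (∑ a ∈ s, ∑ b ∈ s', ∑ c ∈ t,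
          (if p a c then (1:ℕ) else 0) * (if q b c then 1 else 0))
      = ∑ a ∈ s, ∑ c ∈ t, ∑ b ∈ s',
          (if p a c then (1:ℕ) else 0) * (if q b c then 1 else 0) :=
        Finset.sum_congr rfl fun a _ => Finset.sum_comm
    _ = ∑ c ∈ t, ∑ a ∈ s, ∑ b ∈ s',
          (if p a c then (1:ℕ) else 0) * (if q b c then 1 else 0) := Finset.sum_comm
    _ = ∑ c ∈ t, (∑ a ∈ s, if p a c then (1:ℕ) else 0) * (∑ b ∈ s', if q b c then 1 else 0) :=
        Finset.sum_congr rfl fun c _ => (Finset.sum_mul_sum _ _ _ _).symm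

private lemma image_comp_perm {P : Type*} [DecidableEq P] (g h : Equiv.Perm P) (s : Finset P) :
    (s.image ⇑g).image ⇑h = s.image ⇑(h * g) := by
  rw [Finset.image_image]; rfl

private lemma image_inv_perm {P : Type*} [DecidableEq P] (g : Equiv.Perm P) (s : Finset P) :
    (s.image ⇑g).image ⇑g⁻¹ = s := by
  rw [image_comp_perm]; simp

private lemma card_image_perm {P : Type*} [DecidableEq P] (g : Equiv.Perm P) (s : Finset P) :
    (s.image ⇑g).card = s.card :=
  Finset.card_image_of_injective s g.injective

private lemma perm_inv_apply_self {P : Type*} (g : Equiv.Perm P) (x : P) : g⁻¹ (g x) = x := by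
  simp

private lemma perm_apply_inv_self {P : Type*} (g : Equiv.Perm P) (x : P) : g (g⁻¹ x) = x := by
  simp

end AuxHelpers

section DesignAux
variable {P : Type*} [Fintype P] [DecidableEq P]

attribute [local instance] Classical.propDecidable

/-- Block's lemma: a block-transitive automorphism group of a nontrivial
2-design is point-transitive. -/
private lemma point_transitive (blocks : Finset (Finset P)) (v k lam r : ℕ)
    (hD : IsTwoDesign blocks v k lam r)
    (G : Subgroup (Equiv.Perm P)) (hAut : IsAutGroup G blocks)
    (hBT : ∀ B₁ ∈ blocks, ∀ B₂ ∈ blocks, ∃ g ∈ G, B₁.image ⇑g = B₂) :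
    ∀ x y : P, ∃ g ∈ G, g x = y := by
  classical
  intro x y
  by_contra hxy
  push_neg at hxy
  obtain ⟨hcard, hksize, hlam, hpair, hrepl, hk2, hkv⟩ := hD
  have hv5 : 5 ≤ v := by omega
  have hP2 : 1 < Fintype.card P := by rw [hcard]; omega
  obtain ⟨z, hz⟩ := Fintype.exists_ne_of_one_lt_card hP2 x
  -- r > 0
  have hr0 : 0 < r := by
    have h1 : (blocks.filter fun B => x ∈ B ∧ z ∈ B).card = lam := hpair x z (Ne.symm hz)
    have h2 : (blocks.filter fun B => x ∈ B ∧ z ∈ B) ⊆ blocks.filter fun B => x ∈ B := by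
      intro B hB
      simp only [Finset.mem_filter] at hB ⊢
      exact ⟨hB.1, hB.2.1⟩
    have := Finset.card_le_card h2
    rw [h1, hrepl x] at this
    omega
  -- blocks nonempty
  have hbne : 0 < blocks.card := by
    have := hrepl x
    have hsub := Finset.card_le_card (Finset.filter_subset (fun B => x ∈ B) blocks)
    omega
  obtain ⟨B₀, hB₀⟩ := Finset.card_pos.mp hbne
  -- orbits
  set Δ : Finset P := Finset.univ.filter (fun a => ∃ g ∈ G, g x = a) with hΔdef
  set Δ' : Finset P := Finset.univ.filter (fun a => ∃ g ∈ G, g y = a) with hΔ'def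
  have hmemΔ : ∀ a, a ∈ Δ ↔ ∃ g ∈ G, g x = a := by
    intro a; simp [hΔdef]
  have hmemΔ' : ∀ a, a ∈ Δ' ↔ ∃ g ∈ G, g y = a := by
    intro a; simp [hΔ'def]
  have hxΔ : x ∈ Δ := (hmemΔ x).mpr ⟨1, one_mem G, rfl⟩
  have hyΔ' : y ∈ Δ' := (hmemΔ' y).mpr ⟨1, one_mem G, rfl⟩
  have hclΔ : ∀ g ∈ G, ∀ a ∈ Δ, g a ∈ Δ := by
    intro g hg a ha
    obtain ⟨u, hu, hux⟩ := (hmemΔ a).mp ha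
    exact (hmemΔ _).mpr ⟨g * u, mul_mem hg hu, by simp [Equiv.Perm.mul_apply, hux]⟩
  have hclΔ' : ∀ g ∈ G, ∀ a ∈ Δ', g a ∈ Δ' := by
    intro g hg a ha
    obtain ⟨u, hu, hux⟩ := (hmemΔ' a).mp ha
    exact (hmemΔ' _).mpr ⟨g * u, mul_mem hg hu, by simp [Equiv.Perm.mul_apply, hux]⟩
  -- separation
  have hsep : ∀ a ∈ Δ, ∀ c ∈ Δ', a ≠ c := by
    intro a ha c hc h
    obtain ⟨g, hg, hgx⟩ := (hmemΔ a).mp ha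
    obtain ⟨u, hu, huy⟩ := (hmemΔ' c).mp hc
    subst h
    exact hxy (u⁻¹ * g) (mul_mem (inv_mem hu) hg)
      (by rw [Equiv.Perm.mul_apply, hgx, ← huy, perm_inv_apply_self])
  -- constancy of intersection with invariant sets
  have hconst : ∀ (Θ : Finset P), (∀ g ∈ G, ∀ a ∈ Θ, g a ∈ Θ) →
      ∀ B₁ ∈ blocks, ∀ B₂ ∈ blocks,
        (Θ.filter fun a => a ∈ B₂).card = (Θ.filter fun a => a ∈ B₁).card := by
    intro Θ hΘ B₁ hB₁ B₂ hB₂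
    obtain ⟨g, hg, hgB⟩ := hBT B₁ hB₁ B₂ hB₂
    have himg : (Θ.filter fun a => a ∈ B₂) = (Θ.filter fun a => a ∈ B₁).image ⇑g := by
      ext w
      simp only [Finset.mem_filter, Finset.mem_image]
      constructor
      · rintro ⟨hwΘ, hwB⟩
        refine ⟨g⁻¹ w, ⟨hΘ g⁻¹ (inv_mem hg) w hwΘ, ?_⟩, perm_apply_inv_self g w⟩
        rw [← hgB] at hwB
        obtain ⟨u, hu, huw⟩ := Finset.mem_image.mp hwB
        have : g⁻¹ w = u := by rw [← huw, perm_inv_apply_self]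
        rw [this]; exact hu
      · rintro ⟨u, ⟨huΘ, huB⟩, huw⟩
        refine ⟨by rw [← huw]; exact hΘ g hg u huΘ, ?_⟩
        rw [← hgB, ← huw]
        exact Finset.mem_image_of_mem _ huB
    rw [himg, card_image_perm]
  -- E1 for invariant sets
  have hE1 : ∀ (Θ : Finset P), (∀ g ∈ G, ∀ a ∈ Θ, g a ∈ Θ) →
      Θ.card * r = blocks.card * (Θ.filter fun a => a ∈ B₀).card := by
    intro Θ hΘ
    have hdc := double_count Θ blocks (fun a B => a ∈ B)
    have hL : (∑ a ∈ Θ, (blocks.filter fun B => a ∈ B).card) = Θ.card * r := by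
      rw [Finset.sum_congr rfl (fun a _ => hrepl a), Finset.sum_const, smul_eq_mul]
    have hR : (∑ B ∈ blocks, (Θ.filter fun a => a ∈ B).card)
        = blocks.card * (Θ.filter fun a => a ∈ B₀).card := by
      rw [Finset.sum_congr rfl (fun B hB => hconst Θ hΘ B₀ hB₀ B hB),
        Finset.sum_const, smul_eq_mul]
    rw [← hL, hdc, hR]
  set c : ℕ := (Δ.filter fun a => a ∈ B₀).card with hc
  set c' : ℕ := (Δ'.filter fun a => a ∈ B₀).card with hc'
  have hE1Δ : Δ.card * r = blocks.card * c := hE1 Δ hclΔ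
  have hE1Δ' : Δ'.card * r = blocks.card * c' := hE1 Δ' hclΔ'
  -- E2
  have hE2 : lam * (Δ.card * Δ'.card) = blocks.card * (c * c') := by
    have htc := triple_count Δ Δ' blocks (fun a B => a ∈ B) (fun a B => a ∈ B)
    have hL : (∑ a ∈ Δ, ∑ b ∈ Δ', (blocks.filter fun B => a ∈ B ∧ b ∈ B).card)
        = lam * (Δ.card * Δ'.card) := by
      rw [Finset.sum_congr rfl (fun a ha => Finset.sum_congr rfl
        (fun b hb => hpair a b (hsep a ha b hb)))]
      simp [Finset.sum_const, smul_eq_mul]; ring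
    have hR : (∑ B ∈ blocks, (Δ.filter fun a => a ∈ B).card * (Δ'.filter fun b => b ∈ B).card)
        = blocks.card * (c * c') := by
      rw [Finset.sum_congr rfl (fun B hB => by
        rw [hconst Δ hclΔ B₀ hB₀ B hB, hconst Δ' hclΔ' B₀ hB₀ B hB]),
        Finset.sum_const, smul_eq_mul]
    rw [← hL, htc, hR]
  -- E3 (restated to avoid subtraction)
  have hE3 : blocks.card * (c * c) + lam * Δ.card = Δ.card * (Δ.card * lam + r) := by
    have htc := triple_count Δ Δ blocks (fun a B => a ∈ B) (fun a B => a ∈ B)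
    have hL : (∑ a ∈ Δ, ∑ b ∈ Δ, (blocks.filter fun B => a ∈ B ∧ b ∈ B).card)
        = Δ.card * ((Δ.card - 1) * lam + r) := by
      have hinner : ∀ a ∈ Δ, (∑ b ∈ Δ, (blocks.filter fun B => a ∈ B ∧ b ∈ B).card)
          = (Δ.card - 1) * lam + r := by
        intro a ha
        rw [← Finset.sum_erase_add Δ _ ha]
        congr 1
        · rw [Finset.sum_congr rfl (fun b hb => hpair a b
            (Ne.symm (Finset.ne_of_mem_erase hb))), Finset.sum_const, smul_eq_mul,
            Finset.card_erase_of_mem ha]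
        · rw [← hrepl a]
          congr 1
          ext B
          simp [and_self]
      rw [Finset.sum_congr rfl hinner, Finset.sum_const, smul_eq_mul]
    have hR : (∑ B ∈ blocks, (Δ.filter fun a => a ∈ B).card * (Δ.filter fun b => b ∈ B).card)
        = blocks.card * (c * c) := by
      rw [Finset.sum_congr rfl (fun B hB => by rw [hconst Δ hclΔ B₀ hB₀ B hB]),
        Finset.sum_const, smul_eq_mul]
    have hS : blocks.card * (c * c) = Δ.card * ((Δ.card - 1) * lam + r) := by
      rw [← hR, ← htc, hL]
    have hd : 0 < Δ.card := Finset.card_pos.mpr ⟨x, hxΔ⟩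
    have hstep : (Δ.card - 1) * lam + r + lam = Δ.card * lam + r := by
      have h1 : (Δ.card - 1) * lam + r + lam = ((Δ.card - 1) + 1) * lam + r := by ring
      rw [h1, Nat.sub_add_cancel hd]
    calc blocks.card * (c * c) + lam * Δ.card
        = Δ.card * ((Δ.card - 1) * lam + r) + lam * Δ.card := by rw [hS]
      _ = Δ.card * ((Δ.card - 1) * lam + r + lam) := by ring
      _ = Δ.card * (Δ.card * lam + r) := by rw [hstep]
  -- algebra
  have hd : 0 < Δ.card := Finset.card_pos.mpr ⟨x, hxΔ⟩
  have hd' : 0 < Δ'.card := Finset.card_pos.mpr ⟨y, hyΔ'⟩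
  have hlb : lam * blocks.card = r * r := by
    have h1 : (lam * blocks.card) * (Δ.card * Δ'.card)
        = (r * r) * (Δ.card * Δ'.card) := by
      calc (lam * blocks.card) * (Δ.card * Δ'.card)
          = blocks.card * (lam * (Δ.card * Δ'.card)) := by ring
        _ = blocks.card * (blocks.card * (c * c')) := by rw [hE2]
        _ = (blocks.card * c) * (blocks.card * c') := by ring
        _ = (Δ.card * r) * (Δ'.card * r) := by rw [hE1Δ, hE1Δ']
        _ = (r * r) * (Δ.card * Δ'.card) := by ring
    exact Nat.eq_of_mul_eq_mul_right (Nat.mul_pos hd hd') h1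
  have hrl : lam = r := by
    have h5 : (blocks.card * (c * c) + lam * Δ.card) * blocks.card
        = (Δ.card * (Δ.card * lam + r)) * blocks.card := by rw [hE3]
    have h6 : blocks.card * (c * c) * blocks.card = Δ.card * Δ.card * (lam * blocks.card) := by
      calc blocks.card * (c * c) * blocks.card
          = (blocks.card * c) * (blocks.card * c) := by ring
        _ = (Δ.card * r) * (Δ.card * r) := by rw [hE1Δ]
        _ = Δ.card * Δ.card * (r * r) := by ring
        _ = Δ.card * Δ.card * (lam * blocks.card) := by rw [hlb]
    have e1 : (blocks.card * (c * c) + lam * Δ.card) * blocks.card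
        = Δ.card * Δ.card * (lam * blocks.card) + lam * (Δ.card * blocks.card) := by
      calc (blocks.card * (c * c) + lam * Δ.card) * blocks.card
          = blocks.card * (c * c) * blocks.card + lam * (Δ.card * blocks.card) := by ring
        _ = Δ.card * Δ.card * (lam * blocks.card) + lam * (Δ.card * blocks.card) := by rw [h6]
    have e2 : (Δ.card * (Δ.card * lam + r)) * blocks.card
        = Δ.card * Δ.card * (lam * blocks.card) + r * (Δ.card * blocks.card) := by ring
    have e3 : Δ.card * Δ.card * (lam * blocks.card) + lam * (Δ.card * blocks.card)
        = Δ.card * Δ.card * (lam * blocks.card) + r * (Δ.card * blocks.card) := by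
      rw [← e1, h5, e2]
    have e4 : lam * (Δ.card * blocks.card) = r * (Δ.card * blocks.card) :=
      Nat.add_left_cancel e3
    exact Nat.eq_of_mul_eq_mul_right (Nat.mul_pos hd hbne) e4
  -- design identity: (v-1) * lam = r * (k-1)
  have hid : (v - 1) * lam = r * (k - 1) := by
    have hdc := double_count (Finset.univ.erase x) blocks (fun w B => x ∈ B ∧ w ∈ B)
    have hL : (∑ w ∈ Finset.univ.erase x, (blocks.filter fun B => x ∈ B ∧ w ∈ B).card)
        = (v - 1) * lam := by
      rw [Finset.sum_congr rfl (fun w hw => hpair x w (Ne.symm (Finset.ne_of_mem_erase hw))),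
        Finset.sum_const, smul_eq_mul, Finset.card_erase_of_mem (Finset.mem_univ x),
        Finset.card_univ, hcard]
    have hcol : ∀ B ∈ blocks,
        ((Finset.univ.erase x).filter fun w => x ∈ B ∧ w ∈ B).card
          = if x ∈ B then k - 1 else 0 := by
      intro B hB
      by_cases hx : x ∈ B
      · rw [if_pos hx]
        have : ((Finset.univ.erase x).filter fun w => x ∈ B ∧ w ∈ B) = B.erase x := by
          ext w
          simp only [Finset.mem_filter, Finset.mem_erase, Finset.mem_univ, true_and, hx]
          tauto
        rw [this, Finset.card_erase_of_mem hx, hksize B hB]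
      · rw [if_neg hx]
        rw [Finset.card_eq_zero]
        exact Finset.filter_eq_empty_iff.mpr (fun w _ => by simp [hx])
    have hR : (∑ B ∈ blocks, ((Finset.univ.erase x).filter fun w => x ∈ B ∧ w ∈ B).card)
        = r * (k - 1) := by
      rw [Finset.sum_congr rfl hcol, ← Finset.sum_filter, Finset.sum_const, smul_eq_mul,
        hrepl x]
    rw [← hL, hdc, hR]
  -- contradiction
  have hvk : v - 1 = k - 1 := by
    have : (v - 1) * lam = (k - 1) * lam := by
      rw [hid, hrl]; ring
    exact Nat.eq_of_mul_eq_mul_right hlam this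
  omega

/-- Each `G_α`-class of blocks has size `r/2`. -/
private lemma class_size (blocks : Finset (Finset P)) (v k lam r : ℕ)
    (hD : IsTwoDesign blocks v k lam r)
    (G : Subgroup (Equiv.Perm P)) (hAut : IsAutGroup G blocks)
    (hHFT : HalfFlagTransitive G blocks)
    (α : P) (B₁ : Finset P) (hB₁ : B₁ ∈ blocks) (hαB₁ : α ∈ B₁) :
    2 * (blocks.filter fun B => ∃ g ∈ G, g α = α ∧ B₁.image ⇑g = B).card = r := by
  classical
  have hPT := point_transitive blocks v k lam r hD G hAut hHFT.1
  -- row constancy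
  have hrow : ∀ x : P,
      (blocks.filter fun B => ∃ g ∈ G, g α = x ∧ B₁.image ⇑g = B).card
        = (blocks.filter fun B => ∃ g ∈ G, g α = α ∧ B₁.image ⇑g = B).card := by
    intro x
    obtain ⟨h, hhG, hhx⟩ := hPT α x
    have himg : (blocks.filter fun B => ∃ g ∈ G, g α = x ∧ B₁.image ⇑g = B)
        = (blocks.filter fun B => ∃ g ∈ G, g α = α ∧ B₁.image ⇑g = B).image
            (fun B => B.image ⇑h) := by
      ext B
      simp only [Finset.mem_filter, Finset.mem_image]
      constructor
      · rintro ⟨hBbl, g, hgG, hgα, hgB⟩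
        refine ⟨B₁.image ⇑(h⁻¹ * g), ⟨⟨hAut _ (mul_mem (inv_mem hhG) hgG) B₁ hB₁, ?_⟩, ?_⟩⟩
        · exact ⟨h⁻¹ * g, mul_mem (inv_mem hhG) hgG, by
            rw [Equiv.Perm.mul_apply, hgα, ← hhx, perm_inv_apply_self], rfl⟩
        · rw [image_comp_perm, mul_inv_cancel_left, hgB]
      · rintro ⟨B', ⟨⟨hB'bl, g, hgG, hgα, hgB'⟩, hB'B⟩⟩
        refine ⟨?_, h * g, mul_mem hhG hgG, ?_, ?_⟩
        · rw [← hB'B]; exact hAut h hhG B' hB'bl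
        · rw [Equiv.Perm.mul_apply, hgα, hhx]
        · rw [← image_comp_perm, hgB', hB'B]
    rw [himg, Finset.card_image_of_injective _ (Finset.image_injective h.injective)]
  -- column count
  have hcol : ∀ B ∈ blocks,
      2 * (Finset.univ.filter fun x => ∃ g ∈ G, g α = x ∧ B₁.image ⇑g = B).card = k := by
    intro B hB
    obtain ⟨O₁, O₂, hO₁ne, hO₂ne, hdisj, hunion, hcards, hinv₁, hinv₂, htr₁, htr₂⟩ :=
      hHFT.2 B hB
    obtain ⟨g₀, hg₀G, hg₀B⟩ := hHFT.1 B₁ hB₁ B hB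
    have hx₀B : g₀ α ∈ B := by rw [← hg₀B]; exact Finset.mem_image_of_mem _ hαB₁
    have key : ∀ O : Finset P, (∀ g ∈ G, B.image ⇑g = B → O.image ⇑g = O) →
        (∀ x ∈ O, ∀ y ∈ O, ∃ g ∈ G, B.image ⇑g = B ∧ g x = y) → g₀ α ∈ O →
        (Finset.univ.filter fun x => ∃ g ∈ G, g α = x ∧ B₁.image ⇑g = B) = O := by
      intro O hinv htr hx₀O
      ext x
      simp only [Finset.mem_filter, Finset.mem_univ, true_and]
      constructor
      · rintro ⟨g, hgG, hgα, hgB⟩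
        have huB : B.image ⇑(g * g₀⁻¹) = B := by
          have hBB₁ : B.image ⇑g₀⁻¹ = B₁ := by rw [← hg₀B, image_inv_perm]
          rw [← image_comp_perm, hBB₁, hgB]
        have hux₀ : (g * g₀⁻¹) (g₀ α) = x := by
          rw [Equiv.Perm.mul_apply, perm_inv_apply_self, hgα]
        rw [← hinv (g * g₀⁻¹) (mul_mem hgG (inv_mem hg₀G)) huB, ← hux₀]
        exact Finset.mem_image_of_mem _ hx₀O
      · intro hxO
        obtain ⟨u, huG, huB, hux⟩ := htr (g₀ α) hx₀O x hxO
        exact ⟨u * g₀, mul_mem huG hg₀G, by rw [Equiv.Perm.mul_apply, hux],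
          by rw [← image_comp_perm, hg₀B, huB]⟩
    have hcardB : O₁.card + O₂.card = k := by
      rw [← Finset.card_union_of_disjoint hdisj, hunion, hD.block_size B hB]
    rcases Finset.mem_union.mp (by rw [hunion]; exact hx₀B) with hx₀ | hx₀
    · rw [key O₁ hinv₁ htr₁ hx₀]
      omega
    · rw [key O₂ hinv₂ htr₂ hx₀]
      omega
  -- combine
  have hdc := double_count Finset.univ blocks
    (fun x B => ∃ g ∈ G, g α = x ∧ B₁.image ⇑g = B)
  have hL : (∑ x : P, (blocks.filter fun B => ∃ g ∈ G, g α = x ∧ B₁.image ⇑g = B).card)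
      = v * (blocks.filter fun B => ∃ g ∈ G, g α = α ∧ B₁.image ⇑g = B).card := by
    rw [Finset.sum_congr rfl (fun x _ => hrow x), Finset.sum_const, smul_eq_mul,
      Finset.card_univ, hD.card_points]
  have hvr : v * r = blocks.card * k := by
    have hdc2 := double_count Finset.univ blocks (fun x B => x ∈ B)
    have hL2 : (∑ x : P, (blocks.filter fun B => x ∈ B).card) = v * r := by
      rw [Finset.sum_congr rfl (fun x _ => hD.repl_count x), Finset.sum_const, smul_eq_mul,
        Finset.card_univ, hD.card_points]
    have hR2 : (∑ B ∈ blocks, (Finset.univ.filter fun x => x ∈ B).card)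
        = blocks.card * k := by
      rw [Finset.sum_congr rfl (fun B hB => by
        rw [show (Finset.univ.filter fun x => x ∈ B) = B by ext x; simp,
          hD.block_size B hB]), Finset.sum_const, smul_eq_mul]
    rw [← hL2, hdc2, hR2]
  have hmain : v * (2 * (blocks.filter fun B =>
      ∃ g ∈ G, g α = α ∧ B₁.image ⇑g = B).card) = v * r := by
    calc v * (2 * (blocks.filter fun B => ∃ g ∈ G, g α = α ∧ B₁.image ⇑g = B).card)
        = 2 * (v * (blocks.filter fun B => ∃ g ∈ G, g α = α ∧ B₁.image ⇑g = B).card) := by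
          ring
      _ = 2 * (∑ x : P, (blocks.filter fun B => ∃ g ∈ G, g α = x ∧ B₁.image ⇑g = B).card) := by
          rw [hL]
      _ = 2 * (∑ B ∈ blocks,
            (Finset.univ.filter fun x => ∃ g ∈ G, g α = x ∧ B₁.image ⇑g = B).card) := by
          rw [hdc]
      _ = ∑ B ∈ blocks, 2 * (Finset.univ.filter fun x =>
            ∃ g ∈ G, g α = x ∧ B₁.image ⇑g = B).card := by
          rw [Finset.mul_sum]
      _ = ∑ B ∈ blocks, k := Finset.sum_congr rfl (fun B hB => hcol B hB)
      _ = blocks.card * k := by rw [Finset.sum_const, smul_eq_mul]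
      _ = v * r := hvr.symm
  have hv0 : 0 < v := by have := hD.k_lt; have := hD.k_gt; omega
  exact Nat.eq_of_mul_eq_mul_left hv0 hmain

end DesignAux

theorem half_flag_transitive_subdegree_divisibility
    {P : Type*} [Fintype P] [DecidableEq P]
    (blocks : Finset (Finset P)) (v k lam r : ℕ)
    (hD : IsTwoDesign blocks v k lam r)
    (G : Subgroup (Equiv.Perm P))
    (hAut : IsAutGroup G blocks)
    (hHFT : HalfFlagTransitive G blocks)
    (α : P) (Γ : Finset P)
    (hne : Γ.Nonempty)
    (hclosed : ∀ g ∈ G, g α = α → Γ.image ⇑g = Γ)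
    (htrans : ∀ x ∈ Γ, ∀ y ∈ Γ, ∃ g ∈ G, g α = α ∧ g x = y)
    (hnontriv : Γ ≠ {α}) :
    r / Nat.gcd r (2 * lam) ∣ Γ.card := by
  classical
  -- α ∉ Γ
  have hαΓ : α ∉ Γ := by
    intro hα
    refine hnontriv (Finset.eq_singleton_iff_unique_mem.mpr ⟨hα, fun x hx => ?_⟩)
    obtain ⟨g, hgG, hgα, hgx⟩ := htrans α hα x hx
    rw [← hgx, hgα]
  set blocksα := blocks.filter (fun B => α ∈ B) with hblocksα
  -- the basic count
  have count1 : (∑ B ∈ blocksα, (Γ.filter fun w => w ∈ B).card) = Γ.card * lam := by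
    rw [← double_count Γ blocksα (fun w B => w ∈ B)]
    rw [Finset.sum_congr rfl (fun w hw => ?_), Finset.sum_const, smul_eq_mul]
    have hne' : α ≠ w := fun h => hαΓ (h ▸ hw)
    rw [hblocksα, Finset.filter_filter]
    exact hD.pair_count α w hne'
  -- class function
  set cls : Finset P → Finset (Finset P) :=
    fun B₀ => blocks.filter fun B => ∃ g ∈ G, g α = α ∧ B₀.image ⇑g = B with hclsdef
  have hclsmem : ∀ B₀ B : Finset P,
      B ∈ cls B₀ ↔ B ∈ blocks ∧ ∃ g ∈ G, g α = α ∧ B₀.image ⇑g = B := by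
    intro B₀ B; rw [hclsdef]; exact Finset.mem_filter
  have hrefl : ∀ B ∈ blocks, B ∈ cls B := by
    intro B hB
    exact (hclsmem B B).mpr ⟨hB, 1, one_mem G, by simp, by simp⟩
  have hcls_eq : ∀ B₀, B₀ ∈ blocks → ∀ B ∈ cls B₀, cls B = cls B₀ := by
    intro B₀ hB₀ B hB
    obtain ⟨hBbl, g, hgG, hgα, hgB⟩ := (hclsmem B₀ B).mp hB
    have hginvα : g⁻¹ α = α := by
      conv_lhs => rw [← hgα]
      exact perm_inv_apply_self g α
    ext B'
    rw [hclsmem, hclsmem]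
    constructor
    · rintro ⟨hB'bl, h, hhG, hhα, hhB⟩
      exact ⟨hB'bl, h * g, mul_mem hhG hgG,
        by rw [Equiv.Perm.mul_apply, hgα, hhα],
        by rw [← image_comp_perm, hgB, hhB]⟩
    · rintro ⟨hB'bl, u, huG, huα, huB⟩
      refine ⟨hB'bl, u * g⁻¹, mul_mem huG (inv_mem hgG),
        by rw [Equiv.Perm.mul_apply, hginvα, huα], ?_⟩
      rw [← image_comp_perm, ← hgB, image_inv_perm, huB]
  -- constancy of |B ∩ Γ| on classes
  have hconst : ∀ B₀, B₀ ∈ blocks → ∀ B ∈ cls B₀,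
      (Γ.filter fun w => w ∈ B).card = (Γ.filter fun w => w ∈ B₀).card := by
    intro B₀ hB₀ B hB
    obtain ⟨hBbl, g, hgG, hgα, hgB⟩ := (hclsmem B₀ B).mp hB
    have hΓg : Γ.image ⇑g = Γ := hclosed g hgG hgα
    have himg : (Γ.filter fun w => w ∈ B) = (Γ.filter fun w => w ∈ B₀).image ⇑g := by
      ext w
      simp only [Finset.mem_filter, Finset.mem_image]
      constructor
      · rintro ⟨hwΓ, hwB⟩
        refine ⟨g⁻¹ w, ⟨?_, ?_⟩, perm_apply_inv_self g w⟩
        · rw [← hΓg] at hwΓ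
          obtain ⟨u, hu, huw⟩ := Finset.mem_image.mp hwΓ
          rwa [show g⁻¹ w = u by rw [← huw, perm_inv_apply_self]]
        · rw [← hgB] at hwB
          obtain ⟨u, hu, huw⟩ := Finset.mem_image.mp hwB
          rwa [show g⁻¹ w = u by rw [← huw, perm_inv_apply_self]]
      · rintro ⟨u, ⟨huΓ, huB⟩, huw⟩
        constructor
        · rw [← huw, ← hΓg]; exact Finset.mem_image_of_mem _ huΓ
        · rw [← huw, ← hgB]; exact Finset.mem_image_of_mem _ huB
    rw [himg, card_image_perm]
  -- divisibility of the double sum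
  have hdvd : r ∣ ∑ B ∈ blocksα, 2 * (Γ.filter fun w => w ∈ B).card := by
    have hmaps : ∀ B ∈ blocksα, cls B ∈ blocksα.image cls :=
      fun B hB => Finset.mem_image_of_mem cls hB
    rw [← Finset.sum_fiberwise_of_maps_to hmaps (fun B => 2 * (Γ.filter fun w => w ∈ B).card)]
    refine Finset.dvd_sum ?_
    intro t ht
    obtain ⟨B₀, hB₀, rfl⟩ := Finset.mem_image.mp ht
    have hB₀' : B₀ ∈ blocks.filter (fun B => α ∈ B) := hB₀
    have hB₀bl : B₀ ∈ blocks := (Finset.mem_filter.mp hB₀').1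
    have hαB₀ : α ∈ B₀ := (Finset.mem_filter.mp hB₀').2
    -- the fiber is exactly `cls B₀`
    have hmemα : ∀ B : Finset P, B ∈ blocksα ↔ B ∈ blocks ∧ α ∈ B := by
      intro B; rw [hblocksα]; exact Finset.mem_filter
    have hfiber : (blocksα.filter fun B => cls B = cls B₀) = cls B₀ := by
      ext B
      rw [Finset.mem_filter, hmemα]
      constructor
      · rintro ⟨⟨hBbl, hαB⟩, hclsB⟩
        rw [← hclsB]
        exact hrefl B hBbl
      · intro hB
        obtain ⟨hBbl, g, hgG, hgα, hgB⟩ := (hclsmem B₀ B).mp hB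
        have hαB : α ∈ B := by
          rw [← hgB, ← hgα]
          exact Finset.mem_image_of_mem _ hαB₀
        exact ⟨⟨hBbl, hαB⟩, hcls_eq B₀ hB₀bl B hB⟩
    rw [hfiber]
    have hsum : (∑ B ∈ cls B₀, 2 * (Γ.filter fun w => w ∈ B).card)
        = r * (Γ.filter fun w => w ∈ B₀).card := by
      rw [Finset.sum_congr rfl (fun B hB => by rw [hconst B₀ hB₀bl B hB]),
        Finset.sum_const, smul_eq_mul]
      rw [← class_size blocks v k lam r hD G hAut hHFT α B₀ hB₀bl hαB₀]
      ring
    rw [hsum]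
    exact Dvd.intro _ rfl
  -- conclude
  have hdvd2 : r ∣ (2 * lam) * Γ.card := by
    have : (∑ B ∈ blocksα, 2 * (Γ.filter fun w => w ∈ B).card)
        = (2 * lam) * Γ.card := by
      rw [← Finset.mul_sum, count1]; ring
    rwa [this] at hdvd
  have h2lam : 0 < 2 * lam := by have := hD.lam_pos; omega
  have hdpos : 0 < Nat.gcd r (2 * lam) := Nat.gcd_pos_of_pos_right r h2lam
  have h2 : r / Nat.gcd r (2 * lam) ∣ ((2 * lam) / Nat.gcd r (2 * lam)) * Γ.card := by
    refine (Nat.mul_dvd_mul_iff_left hdpos).mp ?_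
    rw [Nat.mul_div_cancel' (Nat.gcd_dvd_left r (2 * lam)), ← mul_assoc,
      Nat.mul_div_cancel' (Nat.gcd_dvd_right r (2 * lam))]
    exact hdvd2
  exact (Nat.coprime_div_gcd_div_gcd hdpos).dvd_of_dvd_mul_left h2
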